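/- For every c₀ > 0 there exists a constant C > 0 depending only on c₀ such that for every continuously differentiable function ψ : [0,∞) → ℝ with ∫₀^∞ ψ'(x)² dx < ∞, one has ∫₀^∞ e^{−c₀x} ψ(x)² dx ≤ C ( ψ(0)² + ∫₀^∞ ψ'(x)² dx ). Consequently, for every δ > 0, δ∫₀^∞ e^{−c₀x} ψ(x)² dx ≤ Cδ( ψ(0)² + ∫₀^∞ ψ'(x)² dx ). -/

import Mathlib

open MeasureTheory Set Filter

/-- Cauchy–Schwarz on a bounded interval: `(∫ g)² ≤ x ∫ g²` for nonnegative continuous `g`. -/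
lemma stmt11_cs (x : ℝ) (hx : 0 < x) (g : ℝ → ℝ) (hg : Continuous g) (hgn : ∀ t, 0 ≤ g t) :
    (∫ t in Ioc (0:ℝ) x, g t) ^ 2 ≤ x * ∫ t in Ioc (0:ℝ) x, (g t)^2 := by
  haveI : IsFiniteMeasure (volume.restrict (Ioc (0:ℝ) x)) :=
    ⟨by rw [Measure.restrict_apply_univ, Real.volume_Ioc]; exact ENNReal.ofReal_lt_top⟩
  have hpq : Real.HolderConjugate 2 2 := Real.HolderConjugate.two_two
  have h1 : MemLp (fun _ : ℝ => (1:ℝ)) (ENNReal.ofReal 2) (volume.restrict (Ioc (0:ℝ) x)) := by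
    simpa using memLp_const (μ := volume.restrict (Ioc (0:ℝ) x)) (1:ℝ)
  have h2 : MemLp g (ENNReal.ofReal 2) (volume.restrict (Ioc (0:ℝ) x)) := by
    rw [show ENNReal.ofReal 2 = 2 by norm_num]
    rw [memLp_two_iff_integrable_sq hg.aestronglyMeasurable]
    exact (hg.pow 2).integrableOn_Ioc
  have key := MeasureTheory.integral_mul_le_Lp_mul_Lq_of_nonneg hpq
    (f := fun _ => (1:ℝ)) (g := g) (Eventually.of_forall fun _ => zero_le_one)
    (Eventually.of_forall hgn) h1 h2
  simp only [one_mul] at key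
  have e1 : ∫ _t in Ioc (0:ℝ) x, (1:ℝ) ^ (2:ℝ) = x := by
    simp [Real.one_rpow, Real.volume_Ioc, ENNReal.toReal_ofReal hx.le, hx.le]
  have e2 : ∫ t in Ioc (0:ℝ) x, g t ^ (2:ℝ) = ∫ t in Ioc (0:ℝ) x, (g t)^2 := by
    refine integral_congr_ae (Eventually.of_forall fun t => ?_)
    simp [Real.rpow_natCast]
  rw [e1, e2] at key
  have hJ : 0 ≤ ∫ t in Ioc (0:ℝ) x, (g t)^2 :=
    integral_nonneg fun t => sq_nonneg _
  have hI : 0 ≤ ∫ t in Ioc (0:ℝ) x, g t := integral_nonneg fun t => hgn t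
  calc (∫ t in Ioc (0:ℝ) x, g t) ^ 2
      ≤ (x ^ (1/2:ℝ) * (∫ t in Ioc (0:ℝ) x, (g t)^2) ^ (1/2:ℝ))^2 :=
        pow_le_pow_left₀ hI key 2
    _ = x * ∫ t in Ioc (0:ℝ) x, (g t)^2 := by
        rw [mul_pow, ← Real.rpow_natCast (x ^ (1/2:ℝ)) 2, ← Real.rpow_natCast (_ ^ (1/2:ℝ)) 2,
          ← Real.rpow_mul hx.le, ← Real.rpow_mul hJ]
        norm_num

/-- first inequality of Lemma 3.1: a weighted Poincaré-type inequality with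
exponential weight on the half line. -/
theorem stmt11 (c₀ : ℝ) (hc₀ : 0 < c₀) :
    ∃ C : ℝ, 0 < C ∧
      ∀ ψ : ℝ → ℝ, ContDiff ℝ 1 ψ →
        IntegrableOn (fun x => (deriv ψ x) ^ 2) (Set.Ioi 0) →
        (∫ x in Set.Ioi (0:ℝ), Real.exp (-c₀ * x) * (ψ x) ^ 2)
          ≤ C * ((ψ 0) ^ 2 + ∫ x in Set.Ioi (0:ℝ), (deriv ψ x) ^ 2) ∧
        ∀ δ : ℝ, 0 < δ →
          δ * (∫ x in Set.Ioi (0:ℝ), Real.exp (-c₀ * x) * (ψ x) ^ 2)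
            ≤ C * δ * ((ψ 0) ^ 2 + ∫ x in Set.Ioi (0:ℝ), (deriv ψ x) ^ 2) := by
  have hc2 : 0 < c₀ / 2 := by linarith
  set J : ℝ := ∫ x in Set.Ioi (0:ℝ), Real.exp (-(c₀/2) * x) with hJdef
  have hJint : IntegrableOn (fun x => Real.exp (-(c₀/2) * x)) (Set.Ioi 0) :=
    exp_neg_integrableOn_Ioi 0 hc2
  have hJ0 : 0 ≤ J := setIntegral_nonneg measurableSet_Ioi fun _ _ => (Real.exp_pos _).le
  refine ⟨(2 + 4/c₀) * J + 1, by positivity, ?_⟩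
  intro ψ hψ hint
  set I := ∫ x in Set.Ioi (0:ℝ), (deriv ψ x)^2 with hIdef
  have hI0 : 0 ≤ I := setIntegral_nonneg measurableSet_Ioi fun _ _ => sq_nonneg _
  have hcont' : Continuous (deriv ψ) := hψ.continuous_deriv le_rfl
  -- pointwise bound
  have hpt : ∀ x ∈ Set.Ioi (0:ℝ),
      Real.exp (-c₀ * x) * (ψ x)^2
        ≤ (2 * (ψ 0)^2 + (4/c₀) * I) * Real.exp (-(c₀/2) * x) := by
    intro x hx
    have hx : 0 < x := hx
    -- FTC
    have hFTC : ∫ t in (0:ℝ)..x, deriv ψ t = ψ x - ψ 0 :=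
      intervalIntegral.integral_deriv_eq_sub
        (fun t _ => (hψ.differentiable one_ne_zero).differentiableAt)
        (hcont'.intervalIntegrable 0 x)
    have habs : |ψ x - ψ 0| ≤ ∫ t in Ioc (0:ℝ) x, |deriv ψ t| := by
      rw [← hFTC, intervalIntegral.integral_of_le hx.le]
      simpa [Real.norm_eq_abs] using
        norm_integral_le_integral_norm (μ := volume.restrict (Ioc (0:ℝ) x)) (deriv ψ)
    have hcs : (∫ t in Ioc (0:ℝ) x, |deriv ψ t|)^2
        ≤ x * ∫ t in Ioc (0:ℝ) x, (deriv ψ t)^2 := by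
      have := stmt11_cs x hx (fun t => |deriv ψ t|) hcont'.abs (fun t => abs_nonneg _)
      simpa [sq_abs] using this
    have hsub : (∫ t in Ioc (0:ℝ) x, (deriv ψ t)^2) ≤ I := by
      refine setIntegral_mono_set hint ?_ ?_
      · exact Eventually.of_forall fun t => sq_nonneg _
      · exact HasSubset.Subset.eventuallyLE Ioc_subset_Ioi_self
    have hsq : (ψ x - ψ 0)^2 ≤ x * I := by
      have h1 : (ψ x - ψ 0)^2 ≤ (∫ t in Ioc (0:ℝ) x, |deriv ψ t|)^2 := by
        rw [← sq_abs (ψ x - ψ 0)]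
        exact pow_le_pow_left₀ (abs_nonneg _) habs 2
      calc (ψ x - ψ 0)^2 ≤ x * ∫ t in Ioc (0:ℝ) x, (deriv ψ t)^2 := h1.trans hcs
        _ ≤ x * I := by nlinarith
    have hψx : (ψ x)^2 ≤ 2 * (ψ 0)^2 + 2 * x * I := by nlinarith [sq_nonneg (ψ x - 2 * ψ 0), hsq]
    -- exponential estimates
    have he1 : Real.exp (-c₀ * x) = Real.exp (-(c₀/2) * x) * Real.exp (-(c₀/2) * x) := by
      rw [← Real.exp_add]; ring_nf
    have he2 : x * Real.exp (-(c₀/2) * x) ≤ 2 / c₀ := by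
      have h3 : (c₀/2) * x ≤ Real.exp ((c₀/2) * x) := (Real.add_one_le_exp _).trans' (by linarith)
      have h4 : x ≤ (2/c₀) * Real.exp ((c₀/2) * x) := by
        rw [div_mul_eq_mul_div, le_div_iff₀ hc₀]
        nlinarith
      calc x * Real.exp (-(c₀/2) * x)
          ≤ ((2/c₀) * Real.exp ((c₀/2) * x)) * Real.exp (-(c₀/2) * x) :=
            mul_le_mul_of_nonneg_right h4 (Real.exp_pos _).le
        _ = 2 / c₀ := by rw [mul_assoc, ← Real.exp_add]; ring_nf; simp
    have hep : 0 < Real.exp (-(c₀/2) * x) := Real.exp_pos _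
    calc Real.exp (-c₀ * x) * (ψ x)^2
        ≤ Real.exp (-c₀ * x) * (2 * (ψ 0)^2 + 2 * x * I) :=
          mul_le_mul_of_nonneg_left hψx (Real.exp_pos _).le
      _ = 2 * (ψ 0)^2 * Real.exp (-c₀ * x)
            + 2 * I * (x * Real.exp (-(c₀/2) * x)) * Real.exp (-(c₀/2) * x) := by
          rw [he1]; ring
      _ ≤ 2 * (ψ 0)^2 * Real.exp (-(c₀/2) * x)
            + 2 * I * (2/c₀) * Real.exp (-(c₀/2) * x) := by
          have hee : Real.exp (-c₀ * x) ≤ Real.exp (-(c₀/2) * x) :=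
            Real.exp_le_exp.mpr (by nlinarith)
          have h5 : 2 * (ψ 0)^2 * Real.exp (-c₀ * x) ≤ 2 * (ψ 0)^2 * Real.exp (-(c₀/2) * x) := by
            have := sq_nonneg (ψ 0); nlinarith
          have h6 : 2 * I * (x * Real.exp (-(c₀/2) * x)) * Real.exp (-(c₀/2) * x)
              ≤ 2 * I * (2/c₀) * Real.exp (-(c₀/2) * x) := by
            have h7 : 2 * I * (x * Real.exp (-(c₀/2) * x)) ≤ 2 * I * (2/c₀) :=
              mul_le_mul_of_nonneg_left he2 (by linarith)
            exact mul_le_mul_of_nonneg_right h7 hep.le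
          linarith
      _ = (2 * (ψ 0)^2 + (4/c₀) * I) * Real.exp (-(c₀/2) * x) := by ring
  -- main inequality
  have hmain : (∫ x in Set.Ioi (0:ℝ), Real.exp (-c₀ * x) * (ψ x)^2)
      ≤ ((2 + 4/c₀) * J + 1) * ((ψ 0)^2 + I) := by
    have hbd : (∫ x in Set.Ioi (0:ℝ), Real.exp (-c₀ * x) * (ψ x)^2)
        ≤ ∫ x in Set.Ioi (0:ℝ), (2 * (ψ 0)^2 + (4/c₀) * I) * Real.exp (-(c₀/2) * x) := by
      refine integral_mono_of_nonneg ?_ (hJint.const_mul _) ?_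
      · exact Eventually.of_forall fun x => mul_nonneg (Real.exp_pos _).le (sq_nonneg _)
      · exact (ae_restrict_iff' measurableSet_Ioi).2 (Eventually.of_forall hpt)
    have heval : (∫ x in Set.Ioi (0:ℝ), (2 * (ψ 0)^2 + (4/c₀) * I) * Real.exp (-(c₀/2) * x))
        = (2 * (ψ 0)^2 + (4/c₀) * I) * J := by
      exact integral_const_mul _ _
    rw [heval] at hbd
    refine hbd.trans ?_
    have h0 : 0 ≤ (ψ 0)^2 := sq_nonneg _
    have hc₀' : 0 < 4 / c₀ := by positivity
    nlinarith [mul_nonneg hJ0 h0, mul_nonneg hJ0 hI0, mul_nonneg (mul_nonneg hc₀'.le hJ0) h0,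
      mul_nonneg (mul_nonneg hc₀'.le hJ0) hI0]
  refine ⟨hmain, fun δ hδ => ?_⟩
  have := mul_le_mul_of_nonneg_left hmain hδ.le
  nlinarith [this]
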